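/- Let k ≥ 2 and let G be a finite simple bipartite graph with no isolated vertices and at least k edges. The edge polytope P(G) is k-neighborly if and only if G contains no cycle of even length at most 2k (equivalently, since G is bipartite, no cycle of length at most 2k). -/

import Mathlib

open Set

/-- The edge polytope of a graph `G` on the vertex set `Fin n`. -/
def edgePolytope {n : ℕ} (G : SimpleGraph (Fin n)) : Set (Fin n → ℝ) :=
  convexHull ℝ {x | ∃ i j : Fin n, G.Adj i j ∧ x = Pi.single i 1 + Pi.single j 1}

/-- A polytope `P` is `k`-neighborly if every set of at most `k` of its vertices
(extreme points) is the vertex set of a face of `P`, a face being the intersection of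
`P` with a supporting hyperplane (`IsExposed`), together with `∅` and `P` itself. -/
def KNeighborly {n : ℕ} (P : Set (Fin n → ℝ)) (k : ℕ) : Prop :=
  ∀ S : Set (Fin n → ℝ), S ⊆ Set.extremePoints ℝ P → S.Finite → S.ncard ≤ k →
    ∃ F : Set (Fin n → ℝ), IsExposed ℝ P F ∧ F ∩ Set.extremePoints ℝ P = S

namespace EPAux

open SimpleGraph

variable {n k : ℕ} {G : SimpleGraph (Fin n)}

noncomputable def vec (i j : Fin n) : Fin n → ℝ := Pi.single i 1 + Pi.single j 1

lemma vec_apply (i j v : Fin n) :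
    vec i j v = (if v = i then (1:ℝ) else 0) + (if v = j then 1 else 0) := by
  simp [vec, Pi.single_apply]

lemma vec_comm (i j : Fin n) : vec i j = vec j i := add_comm _ _

lemma vec_inj {i j a b : Fin n} (hij : i ≠ j) (hab : a ≠ b) (h : vec a b = vec i j) :
    (a = i ∧ b = j) ∨ (a = j ∧ b = i) := by
  have hi := congrFun h i
  have hj := congrFun h j
  rw [vec_apply, vec_apply] at hi hj
  simp only [if_pos rfl] at hi hj
  rcases eq_or_ne i a with h1 | h1 <;> rcases eq_or_ne i b with h2 | h2 <;>
    rcases eq_or_ne j a with h3 | h3 <;> rcases eq_or_ne j b with h4 | h4 <;>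
    simp_all

/-! ### Convexity lemmas -/

lemma hull_le {V : Set (Fin n → ℝ)} (l : (Fin n → ℝ) →ₗ[ℝ] ℝ) {c : ℝ}
    (hV : ∀ v ∈ V, l v ≤ c) : ∀ x ∈ convexHull ℝ V, l x ≤ c :=
  convexHull_min hV (convex_halfSpace_le l.isLinear c)

lemma mem_hull_face {V : Set (Fin n → ℝ)} (l : (Fin n → ℝ) →ₗ[ℝ] ℝ) {c : ℝ}
    (hV : ∀ v ∈ V, l v ≤ c) {x} (hx : x ∈ convexHull ℝ V) (hxc : l x = c) :
    x ∈ convexHull ℝ {v | v ∈ V ∧ l v = c} := by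
  rw [convexHull_eq] at hx
  obtain ⟨ι, t, w, z, hw0, hw1, hzV, hcm⟩ := hx
  have hxe : x = ∑ i ∈ t, w i • z i := by
    rw [← hcm, Finset.centerMass_eq_of_sum_1 _ _ hw1]
  have hlx : ∑ i ∈ t, w i * l (z i) = c := by
    rw [← hxc, hxe]; simp [map_sum]
  have hkey : ∀ i ∈ t, w i * (c - l (z i)) = 0 := by
    rw [← Finset.sum_eq_zero_iff_of_nonneg]
    · have h1 : ∑ i ∈ t, w i * c = c := by
        rw [← Finset.sum_mul, hw1, one_mul]
      have h2 : ∑ i ∈ t, w i * (c - l (z i)) = ∑ i ∈ t, (w i * c - w i * l (z i)) := by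
        apply Finset.sum_congr rfl; intros; ring
      rw [h2, Finset.sum_sub_distrib, h1, hlx, sub_self]
    · intro i hi
      exact mul_nonneg (hw0 i hi) (by linarith [hV (z i) (hzV i hi)])
  have ht' : x = (t.filter (fun i => w i ≠ 0)).centerMass w z := by
    rw [← hcm]; exact (Finset.centerMass_filter_ne_zero _).symm
  rw [ht']
  apply Finset.centerMass_mem_convexHull
  · intro i hi; exact hw0 i (Finset.mem_filter.mp hi).1
  · rw [Finset.sum_filter_ne_zero, hw1]; norm_num
  · intro i hi
    obtain ⟨hit, hwi⟩ := Finset.mem_filter.mp hi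
    refine ⟨hzV i hit, ?_⟩
    rcases mul_eq_zero.mp (hkey i hit) with h | h
    · exact absurd h hwi
    · linarith

noncomputable def l2 (i j : Fin n) : (Fin n → ℝ) →ₗ[ℝ] ℝ :=
  (LinearMap.proj i : (Fin n → ℝ) →ₗ[ℝ] ℝ) + (LinearMap.proj j : (Fin n → ℝ) →ₗ[ℝ] ℝ)

lemma l2_apply (i j : Fin n) (x : Fin n → ℝ) : l2 i j x = x i + x j := rfl

lemma l2_vec_le {i j a b : Fin n} (hab : a ≠ b) : l2 i j (vec a b) ≤ 2 := by
  rw [l2_apply, vec_apply, vec_apply]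
  split_ifs <;> simp_all <;> norm_num

lemma l2_vec_eq2 {i j a b : Fin n} (hij : i ≠ j) (hab : a ≠ b)
    (h : l2 i j (vec a b) = 2) : vec a b = vec i j := by
  rw [l2_apply, vec_apply, vec_apply] at h
  split_ifs at h <;> simp_all [vec_comm]

def VG (G : SimpleGraph (Fin n)) : Set (Fin n → ℝ) :=
  {x | ∃ i j : Fin n, G.Adj i j ∧ x = vec i j}

lemma edgePolytope_eq (G : SimpleGraph (Fin n)) :
    edgePolytope G = convexHull ℝ (VG G) := rfl

lemma VG_le (G : SimpleGraph (Fin n)) {i j : Fin n} :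
    ∀ v ∈ VG G, l2 i j v ≤ 2 := by
  rintro v ⟨a, b, hab, rfl⟩
  exact l2_vec_le hab.ne

lemma extremePoints_VG (G : SimpleGraph (Fin n)) :
    Set.extremePoints ℝ (edgePolytope G) = VG G := by
  rw [edgePolytope_eq]
  apply Subset.antisymm (extremePoints_convexHull_subset)
  rintro x ⟨i, j, hadj, rfl⟩
  have hij : i ≠ j := hadj.ne
  rw [mem_extremePoints]
  constructor
  · exact subset_convexHull ℝ _ ⟨i, j, hadj, rfl⟩
  · intro x₁ h₁ x₂ h₂ hseg
    have hx2 : l2 i j (vec i j) = 2 := by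
      rw [l2_apply]
      simp [vec, Pi.single_apply, hij, hij.symm]
      norm_num
    have hface : ∀ y ∈ convexHull ℝ (VG G), l2 i j y = 2 → y = vec i j := by
      intro y hy hy2
      have hmf := mem_hull_face (l2 i j) (VG_le G) hy hy2
      have hsub : {v | v ∈ VG G ∧ l2 i j v = 2} ⊆ {vec i j} := by
        rintro v ⟨⟨a, b, hab, rfl⟩, hv2⟩
        exact l2_vec_eq2 hij hab.ne hv2
      have := convexHull_mono hsub hmf
      rwa [convexHull_singleton] at this
    obtain ⟨a, b, ha, hb, hab, hx⟩ := hseg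
    have hl1 : l2 i j x₁ ≤ 2 := hull_le _ (VG_le G) _ h₁
    have hl2 : l2 i j x₂ ≤ 2 := hull_le _ (VG_le G) _ h₂
    have hx' : a • x₁ + b • x₂ = vec i j := hx
    have hsum : a * l2 i j x₁ + b * l2 i j x₂ = 2 := by
      rw [← hx2, ← hx', map_add, map_smul, map_smul, smul_eq_mul, smul_eq_mul]
    have e1 : l2 i j x₁ = 2 := by nlinarith
    have e2 : l2 i j x₂ = 2 := by nlinarith
    exact ⟨hface _ h₁ e1, hface _ h₂ e2⟩

/-! ### Graph lemmas -/

lemma walk_parity (C : G.Coloring (Fin 2)) :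
    ∀ {u v : Fin n} (p : G.Walk u v), Even p.length ↔ C u = C v := by
  intro u v p
  induction p with
  | nil => simp
  | @cons u a v h q ih =>
    have hne : C u ≠ C a := C.valid h
    have key : ∀ x y z : Fin 2, x ≠ y → ((y = z) ↔ ¬(x = z)) := by decide
    rw [Walk.length_cons, Nat.even_add_one, ih, key _ _ _ hne, not_not]

lemma cycle_even (hbip : G.Colorable 2) {v : Fin n} (c : G.Walk v v) :
    Even c.length := by
  obtain ⟨C⟩ := hbip
  exact (walk_parity C c).mpr rfl

lemma support_eq_map {u v : Fin n} (p : G.Walk u v) :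
    p.support = (List.range (p.length + 1)).map p.getVert := by
  induction p with
  | nil => simp [List.range_succ]
  | @cons u a v h q ih =>
    rw [Walk.support_cons, Walk.length_cons, List.range_succ_eq_map, List.map_cons,
      List.map_map, Walk.getVert_zero, ih]
    refine congrArg (u :: ·) (List.map_congr_left ?_)
    intro i _
    simp [Function.comp, Walk.getVert_cons_succ]

lemma support_tail_eq_map {u v : Fin n} (p : G.Walk u v) :
    p.support.tail = (List.range p.length).map (fun i => p.getVert (i + 1)) := by
  rw [support_eq_map, List.range_succ_eq_map]
  simp [List.map_map, Function.comp]

lemma cycle_getVert_inj {v : Fin n} {c : G.Walk v v} (hc : c.IsCycle) {i j : ℕ}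
    (hi1 : 1 ≤ i) (hi : i ≤ c.length) (hj1 : 1 ≤ j) (hj : j ≤ c.length)
    (h : c.getVert i = c.getVert j) : i = j := by
  have hnd := hc.support_nodup
  rw [support_tail_eq_map] at hnd
  rw [List.nodup_map_iff_inj_on List.nodup_range] at hnd
  have hkey := hnd (i - 1) (List.mem_range.mpr (by omega)) (j - 1) (List.mem_range.mpr (by omega))
  have h' : c.getVert (i - 1 + 1) = c.getVert (j - 1 + 1) := by
    rw [Nat.sub_add_cancel hi1, Nat.sub_add_cancel hj1]; exact h
  have := hkey h'
  omega

lemma nodup_subset_card {l : List (Fin n)} {A : Finset (Fin n)} (hnd : l.Nodup)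
    (hsub : ∀ x ∈ l, x ∈ A) : l.length ≤ A.card := by
  rw [← List.toFinset_card_of_nodup hnd]
  exact Finset.card_le_card (fun x hx => hsub x (List.mem_toFinset.mp hx))

lemma cycle_length_le_card {v : Fin n} {c : G.Walk v v} (hc : c.IsCycle)
    {A : Finset (Fin n)} (hA : ∀ x ∈ c.support, x ∈ A) : c.length ≤ A.card := by
  have h1 : c.support.tail.length = c.length := by
    simp [List.length_tail, Walk.length_support]
  rw [← h1]
  exact nodup_subset_card hc.support_nodup
    (fun x hx => hA x (List.mem_of_mem_tail hx))

lemma lastEdge : ∀ {u w x : Fin n} (p : G.Walk u w), p.IsPath → s(x, w) ∈ p.edges →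
    p.getVert (p.length - 1) = x := by
  intro u w x p
  induction p with
  | nil => simp
  | @cons u a v h q ih =>
    intro hp he
    rw [Walk.edges_cons, List.mem_cons] at he
    rcases he with he | he
    · rw [Sym2.eq_iff] at he
      rcases he with ⟨rfl, rfl⟩ | ⟨rfl, h2⟩
      · have : q = Walk.nil := Walk.isPath_iff_eq_nil.mp hp.of_cons
        subst this
        simp
      · exfalso
        rw [Walk.cons_isPath_iff] at hp
        exact hp.2 (h2 ▸ q.end_mem_support)
    · have hq := ih hp.of_cons he
      have hql : 1 ≤ q.length := by
        by_contra hq0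
        have hq1 : q.length = 0 := by omega
        have hq2 : q.edges.length = 0 := by rw [Walk.length_edges, hq1]
        rw [List.length_eq_zero_iff] at hq2
        rw [hq2] at he
        simp at he
      rw [Walk.length_cons]
      have h3 : q.length + 1 - 1 = (q.length - 1) + 1 := by omega
      rw [h3, Walk.getVert_cons_succ, hq]

lemma exists_leaf (G : SimpleGraph (Fin n)) (A : Finset (Fin n)) (hA : A.Nonempty)
    (hnc : ¬ ∃ (v : Fin n) (c : G.Walk v v), c.IsCycle ∧ ∀ x ∈ c.support, x ∈ A) :
    ∃ v ∈ A, ∀ x y : Fin n, G.Adj v x → G.Adj v y → x ∈ A → y ∈ A → x = y := by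
  by_contra hcon
  push_neg at hcon
  set Lset : Set ℕ :=
    {l | ∃ (u w : Fin n) (p : G.Walk u w), p.IsPath ∧ (∀ x ∈ p.support, x ∈ A) ∧ p.length = l}
    with hLset
  obtain ⟨a, ha⟩ := hA
  have hne : Lset.Nonempty := by
    refine ⟨0, a, a, Walk.nil, Walk.IsPath.nil, ?_, rfl⟩
    intro x hx
    simp only [Walk.support_nil, List.mem_singleton] at hx
    exact hx ▸ ha
  have hbdd : BddAbove Lset := by
    refine ⟨A.card, ?_⟩
    rintro l ⟨u, w, p, hp, hsub, rfl⟩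
    have := nodup_subset_card hp.support_nodup hsub
    rw [Walk.length_support] at this
    omega
  have hmem := Nat.sSup_mem hne hbdd
  obtain ⟨u, w, p, hp, hsub, hlen⟩ := hmem
  have hwA : w ∈ A := hsub w p.end_mem_support
  obtain ⟨x, y, hax, hay, hxA, hyA, hxy⟩ := hcon w hwA
  obtain ⟨z, haz, hzA, hzd⟩ :
      ∃ z : Fin n, G.Adj w z ∧ z ∈ A ∧ z ≠ p.getVert (p.length - 1) := by
    rcases eq_or_ne x (p.getVert (p.length - 1)) with hx | hx
    · exact ⟨y, hay, hyA, fun hy => hxy (hx.trans hy.symm ▸ rfl)⟩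
    · exact ⟨x, hax, hxA, hx⟩
  by_cases hzs : z ∈ p.support
  · have hq : (p.dropUntil z hzs).IsPath := hp.dropUntil hzs
    have hedge : s(w, z) ∉ (p.dropUntil z hzs).edges := by
      intro hmem
      have h2 : s(z, w) ∈ p.edges := by
        rw [Sym2.eq_swap]
        exact Walk.edges_dropUntil_subset p hzs hmem
      exact hzd (lastEdge p hp h2).symm
    have hcyc : (Walk.cons haz (p.dropUntil z hzs)).IsCycle :=
      (Walk.cons_isCycle_iff _ haz).mpr ⟨hq, hedge⟩
    refine hnc ⟨w, Walk.cons haz (p.dropUntil z hzs), hcyc, ?_⟩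
    intro t ht
    rw [Walk.support_cons, List.mem_cons] at ht
    rcases ht with rfl | ht
    · exact hwA
    · exact hsub t (Walk.support_dropUntil_subset p hzs ht)
  · have hp' : (Walk.cons haz.symm p.reverse).IsPath := by
      rw [Walk.cons_isPath_iff]
      refine ⟨hp.reverse, ?_⟩
      rw [Walk.support_reverse, List.mem_reverse]
      exact hzs
    have hmem' : p.length + 1 ∈ Lset := by
      refine ⟨z, u, Walk.cons haz.symm p.reverse, hp', ?_, by simp⟩
      intro t ht
      rw [Walk.support_cons, List.mem_cons] at ht
      rcases ht with rfl | ht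
      · exact hzA
      · rw [Walk.support_reverse, List.mem_reverse] at ht
        exact hsub t ht
    have := le_csSup hbdd hmem'
    omega

lemma exists_weights (SF : Finset (Sym2 (Fin n))) :
    ∀ (A : Finset (Fin n)),
    (¬ ∃ (v : Fin n) (c : G.Walk v v), c.IsCycle ∧ ∀ x ∈ c.support, x ∈ A) →
    ∃ w : Fin n → ℝ, ∀ i j : Fin n, G.Adj i j → i ∈ A → j ∈ A →
      (s(i, j) ∈ SF → w i + w j = 0) ∧ (s(i, j) ∉ SF → w i + w j < 0) := by
  classical
  intro A
  induction A using Finset.strongInduction with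
  | _ A ih =>
    intro hnc
    rcases Finset.eq_empty_or_nonempty A with rfl | hA
    · exact ⟨0, fun i j _ hi _ => absurd hi (Finset.notMem_empty i)⟩
    obtain ⟨v, hvA, hleaf⟩ := exists_leaf G A hA hnc
    have hsub : A.erase v ⊂ A := Finset.erase_ssubset hvA
    have hnc' : ¬ ∃ (u : Fin n) (c : G.Walk u u), c.IsCycle ∧
        ∀ x ∈ c.support, x ∈ A.erase v := by
      rintro ⟨u, c, hc, hsupp⟩
      exact hnc ⟨u, c, hc, fun x hx => Finset.mem_of_mem_erase (hsupp x hx)⟩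
    obtain ⟨w, hw⟩ := ih _ hsub hnc'
    by_cases hex : ∃ u ∈ A.erase v, G.Adj v u
    · obtain ⟨u, huA, hvu⟩ := hex
      set t : ℝ := if s(v, u) ∈ SF then -w u else -w u - 1 with ht
      refine ⟨Function.update w v t, ?_⟩
      intro i j hij hiA hjA
      by_cases hiv : i = v
      · subst hiv
        have hjv : j ≠ i := (hij.ne).symm
        have hju : j = u := hleaf j u hij hvu hjA (Finset.mem_of_mem_erase huA)
        subst hju
        rw [Function.update_self, Function.update_of_ne hjv]
        constructor
        · intro hmem
          rw [ht, if_pos hmem]; ring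
        · intro hmem
          rw [ht, if_neg hmem]; linarith
      · by_cases hjv : j = v
        · subst hjv
          have hiu : i = u := hleaf i u hij.symm hvu hiA (Finset.mem_of_mem_erase huA)
          subst hiu
          rw [Function.update_self, Function.update_of_ne hiv]
          have hsym : s(i, j) = s(j, i) := Sym2.eq_swap
          constructor
          · intro hmem
            rw [ht, if_pos (hsym ▸ hmem)]; ring
          · intro hmem
            rw [ht, if_neg (fun hc => hmem (hsym ▸ hc))]; linarith
        · rw [Function.update_of_ne hiv, Function.update_of_ne hjv]
          exact hw i j hij (Finset.mem_erase.mpr ⟨hiv, hiA⟩) (Finset.mem_erase.mpr ⟨hjv, hjA⟩)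
    · push_neg at hex
      refine ⟨Function.update w v 0, ?_⟩
      intro i j hij hiA hjA
      by_cases hiv : i = v
      · subst hiv
        exact absurd hij (hex j (Finset.mem_erase.mpr ⟨(hij.ne).symm, hjA⟩))
      · by_cases hjv : j = v
        · subst hjv
          exact absurd hij.symm (hex i (Finset.mem_erase.mpr ⟨hiv, hiA⟩))
        · rw [Function.update_of_ne hiv, Function.update_of_ne hjv]
          exact hw i j hij (Finset.mem_erase.mpr ⟨hiv, hiA⟩) (Finset.mem_erase.mpr ⟨hjv, hjA⟩)

lemma global_weights (hbip : G.Colorable 2)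
    (hnc : ¬ ∃ (v : Fin n) (c : G.Walk v v), c.IsCycle ∧ Even c.length ∧ c.length ≤ 2 * k)
    (SF : Finset (Sym2 (Fin n))) (hcard : SF.card ≤ k) :
    ∃ w : Fin n → ℝ, ∀ i j : Fin n, G.Adj i j →
      (s(i, j) ∈ SF → w i + w j = 0) ∧ (s(i, j) ∉ SF → w i + w j < 0) := by
  classical
  set A : Finset (Fin n) := Finset.univ.filter (fun v => ∃ e ∈ SF, v ∈ e) with hAdef
  have hcard2 : ∀ e : Sym2 (Fin n), (Finset.univ.filter (· ∈ e)).card ≤ 2 := by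
    intro e
    induction e with
    | _ i j =>
      have hsub : Finset.univ.filter (· ∈ s(i, j)) ⊆ {i, j} := by
        intro x hx
        simp only [Finset.mem_filter, Sym2.mem_iff] at hx
        simpa [Finset.mem_insert] using hx.2
      calc (Finset.univ.filter (· ∈ s(i, j))).card ≤ ({i, j} : Finset (Fin n)).card :=
            Finset.card_le_card hsub
        _ ≤ 2 := Finset.card_insert_le _ _ |>.trans (by simp)
  have hAcard : A.card ≤ 2 * k := by
    have hsub : A ⊆ SF.biUnion (fun e => Finset.univ.filter (· ∈ e)) := by
      intro x hx
      rw [hAdef, Finset.mem_filter] at hx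
      obtain ⟨-, e, he, hxe⟩ := hx
      exact Finset.mem_biUnion.mpr ⟨e, he, Finset.mem_filter.mpr ⟨Finset.mem_univ _, hxe⟩⟩
    calc A.card ≤ (SF.biUnion (fun e => Finset.univ.filter (· ∈ e))).card :=
          Finset.card_le_card hsub
      _ ≤ ∑ e ∈ SF, (Finset.univ.filter (· ∈ e)).card := Finset.card_biUnion_le
      _ ≤ ∑ _e ∈ SF, 2 := Finset.sum_le_sum (fun e _ => hcard2 e)
      _ = 2 * SF.card := by rw [Finset.sum_const, smul_eq_mul, mul_comm]
      _ ≤ 2 * k := by omega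
  have hncA : ¬ ∃ (v : Fin n) (c : G.Walk v v), c.IsCycle ∧ ∀ x ∈ c.support, x ∈ A := by
    rintro ⟨v, c, hc, hsupp⟩
    exact hnc ⟨v, c, hc, cycle_even hbip c, (cycle_length_le_card hc hsupp).trans hAcard⟩
  obtain ⟨w, hw⟩ := exists_weights SF A hncA
  set M : ℝ := 1 + ∑ v : Fin n, |w v| with hM
  have hsum_nonneg : (0:ℝ) ≤ ∑ v : Fin n, |w v| :=
    Finset.sum_nonneg (fun v _ => abs_nonneg _)
  have hwle : ∀ v : Fin n, w v ≤ M - 1 := by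
    intro v
    have h1 := Finset.single_le_sum (f := fun v => |w v|) (fun v _ => abs_nonneg _)
      (Finset.mem_univ v)
    calc w v ≤ |w v| := le_abs_self _
      _ ≤ ∑ v : Fin n, |w v| := h1
      _ = M - 1 := by rw [hM]; ring
  have hmemA : ∀ {i j : Fin n}, s(i, j) ∈ SF → i ∈ A ∧ j ∈ A := by
    intro i j hij
    constructor <;> rw [hAdef, Finset.mem_filter] <;>
      exact ⟨Finset.mem_univ _, s(i, j), hij, by simp⟩
  refine ⟨fun v => if v ∈ A then w v else -M, ?_⟩
  intro i j hij
  simp only []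
  constructor
  · intro hmem
    obtain ⟨hiA, hjA⟩ := hmemA hmem
    rw [if_pos hiA, if_pos hjA]
    exact (hw i j hij hiA hjA).1 hmem
  · intro hmem
    by_cases hiA : i ∈ A <;> by_cases hjA : j ∈ A
    · rw [if_pos hiA, if_pos hjA]
      exact (hw i j hij hiA hjA).2 hmem
    · rw [if_pos hiA, if_neg hjA]
      have := hwle i
      linarith
    · rw [if_neg hiA, if_pos hjA]
      have := hwle j
      linarith
    · rw [if_neg hiA, if_neg hjA]
      have : (0:ℝ) < M := by rw [hM]; linarith
      linarith

/-! ### The linear functional attached to a weight function -/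

noncomputable def lw (w : Fin n → ℝ) : (Fin n → ℝ) →L[ℝ] ℝ :=
  LinearMap.toContinuousLinearMap
    (∑ v : Fin n, w v • (LinearMap.proj v : (Fin n → ℝ) →ₗ[ℝ] ℝ))

lemma lw_apply (w : Fin n → ℝ) (x : Fin n → ℝ) : lw w x = ∑ v : Fin n, w v * x v := by
  simp [lw, LinearMap.sum_apply]

lemma lw_vec (w : Fin n → ℝ) (a b : Fin n) : lw w (vec a b) = w a + w b := by
  rw [lw_apply]
  have h1 : ∀ v : Fin n, w v * vec a b v =
      (if v = a then w v else 0) + (if v = b then w v else 0) := by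
    intro v
    rw [vec_apply]
    split_ifs <;> ring
  rw [Finset.sum_congr rfl (fun v _ => h1 v), Finset.sum_add_distrib]
  rw [Finset.sum_ite_eq' Finset.univ a w, Finset.sum_ite_eq' Finset.univ b w]
  simp

noncomputable def sym2vec : Sym2 (Fin n) → (Fin n → ℝ) :=
  Sym2.lift ⟨vec, fun i j => vec_comm i j⟩

lemma sym2vec_mk (i j : Fin n) : sym2vec s(i, j) = vec i j := rfl

/-! ### Direction 1: no short even cycle implies k-neighborly -/

lemma dir1 (hbip : G.Colorable 2)
    (hnc : ¬ ∃ (v : Fin n) (c : G.Walk v v), c.IsCycle ∧ Even c.length ∧ c.length ≤ 2 * k) :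
    KNeighborly (edgePolytope G) k := by
  classical
  intro S hSsub hSfin hScard
  rcases S.eq_empty_or_nonempty with rfl | hSne
  · exact ⟨∅, fun h => absurd h (by simp), by simp⟩
  have hext : Set.extremePoints ℝ (edgePolytope G) = VG G := extremePoints_VG G
  have hSVG : S ⊆ VG G := hext ▸ hSsub
  set SF : Finset (Sym2 (Fin n)) := Finset.univ.filter
      (fun e => e ∈ G.edgeSet ∧ sym2vec e ∈ S) with hSFdef
  have hSFadj : ∀ {a b : Fin n}, s(a, b) ∈ SF → G.Adj a b ∧ vec a b ∈ S := by
    intro a b hab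
    rw [hSFdef, Finset.mem_filter] at hab
    exact ⟨hab.2.1, hab.2.2⟩
  have hSFmem : ∀ {a b : Fin n}, G.Adj a b → vec a b ∈ S → s(a, b) ∈ SF := by
    intro a b hadj hv
    rw [hSFdef, Finset.mem_filter]
    exact ⟨Finset.mem_univ _, hadj, hv⟩
  have hSFcard : SF.card ≤ k := by
    have hinj : Set.InjOn sym2vec (SF : Set (Sym2 (Fin n))) := by
      intro e₁ he₁ e₂ he₂ heq
      induction e₁ using Sym2.ind with
      | _ a b =>
        induction e₂ using Sym2.ind with
        | _ c d =>
          have hab := (hSFadj (Finset.mem_coe.mp he₁)).1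
          have hcd := (hSFadj (Finset.mem_coe.mp he₂)).1
          rw [sym2vec_mk, sym2vec_mk] at heq
          rcases vec_inj hcd.ne hab.ne heq with ⟨rfl, rfl⟩ | ⟨rfl, rfl⟩
          · rfl
          · exact Sym2.eq_swap
    have himg : SF.image sym2vec ⊆ hSfin.toFinset := by
      intro x hx
      rw [Finset.mem_image] at hx
      obtain ⟨e, he, rfl⟩ := hx
      induction e using Sym2.ind with
      | _ a b =>
        rw [Set.Finite.mem_toFinset]
        exact (hSFadj he).2
    calc SF.card = (SF.image sym2vec).card := (Finset.card_image_of_injOn hinj).symm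
      _ ≤ hSfin.toFinset.card := Finset.card_le_card himg
      _ = S.ncard := (Set.ncard_eq_toFinset_card S hSfin).symm
      _ ≤ k := hScard
  obtain ⟨w, hw⟩ := global_weights hbip hnc SF hSFcard
  have hVle : ∀ v ∈ VG G, (lw w).toLinearMap v ≤ 0 := by
    rintro v ⟨a, b, hab, rfl⟩
    show lw w (vec a b) ≤ 0
    rw [lw_vec]
    by_cases hm : s(a, b) ∈ SF
    · exact le_of_eq ((hw a b hab).1 hm)
    · exact le_of_lt ((hw a b hab).2 hm)
  have hPle : ∀ y ∈ edgePolytope G, lw w y ≤ 0 := by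
    intro y hy
    rw [edgePolytope_eq] at hy
    exact hull_le _ hVle _ hy
  have hS0 : ∀ s ∈ S, lw w s = 0 := by
    intro s hs
    obtain ⟨a, b, hab, rfl⟩ := hSVG hs
    rw [lw_vec]
    exact (hw a b hab).1 (hSFmem hab hs)
  have hSP : ∀ s ∈ S, s ∈ edgePolytope G := by
    intro s hs
    rw [edgePolytope_eq]
    exact subset_convexHull ℝ _ (hSVG hs)
  refine ⟨{x ∈ edgePolytope G | ∀ y ∈ edgePolytope G, lw w y ≤ lw w x},
    fun _ => ⟨lw w, rfl⟩, ?_⟩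
  apply Subset.antisymm
  · rintro x ⟨⟨hxP, hxmax⟩, hxext⟩
    have hxVG : x ∈ VG G := hext ▸ hxext
    obtain ⟨a, b, hab, rfl⟩ := hxVG
    obtain ⟨s₀, hs₀⟩ := hSne
    have h1 : lw w s₀ ≤ lw w (vec a b) := hxmax s₀ (hSP s₀ hs₀)
    have h0 : (0:ℝ) ≤ lw w (vec a b) := by rw [← hS0 s₀ hs₀]; exact h1
    have hub : lw w (vec a b) ≤ 0 := hPle _ hxP
    have heq0 : w a + w b = 0 := by rw [← lw_vec]; linarith
    by_cases hm : s(a, b) ∈ SF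
    · exact (hSFadj hm).2
    · exact absurd heq0 (ne_of_lt ((hw a b hab).2 hm))
  · intro s hs
    refine ⟨⟨hSP s hs, ?_⟩, hSsub hs⟩
    intro y hy
    rw [hS0 s hs]
    exact hPle y hy

/-! ### Direction 2: a short even cycle contradicts k-neighborliness -/

lemma sum_pairs (f : ℕ → ℝ) (m : ℕ) :
    ∑ i ∈ Finset.range m, (f (2 * i) + f (2 * i + 1)) = ∑ j ∈ Finset.range (2 * m), f j := by
  induction m with
  | zero => simp
  | succ m ih =>
    rw [Finset.sum_range_succ, ih]
    have h : 2 * (m + 1) = (2 * m + 1) + 1 := by ring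
    rw [h, Finset.sum_range_succ, Finset.sum_range_succ]
    ring

lemma sum_pairs' (f : ℕ → ℝ) (m : ℕ) :
    ∑ i ∈ Finset.range m, (f (2 * i + 1) + f (2 * i + 2)) =
      ∑ j ∈ Finset.range (2 * m), f (j + 1) := by
  induction m with
  | zero => simp
  | succ m ih =>
    rw [Finset.sum_range_succ, ih]
    have h : 2 * (m + 1) = (2 * m + 1) + 1 := by ring
    rw [h, Finset.sum_range_succ, Finset.sum_range_succ]
    have h1 : 2 * m + 1 + 1 = 2 * m + 2 := by ring
    rw [h1]
    ring

lemma dir2 (hk : 2 ≤ k) (hkn : KNeighborly (edgePolytope G) k)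
    {v : Fin n} {c : G.Walk v v} (hc : c.IsCycle) (hev : Even c.length)
    (hlen : c.length ≤ 2 * k) : False := by
  classical
  obtain ⟨m, hm⟩ := hev
  have hm' : c.length = 2 * m := by omega
  have h3 : 3 ≤ c.length := hc.three_le_length
  have hm2 : 2 ≤ m := by omega
  have hmk : m ≤ k := by omega
  have hadj : ∀ i : ℕ, i < 2 * m → G.Adj (c.getVert i) (c.getVert (i + 1)) := by
    intro i hi
    exact c.adj_getVert_succ (by omega)
  have hext : Set.extremePoints ℝ (edgePolytope G) = VG G := extremePoints_VG G
  set S : Set (Fin n → ℝ) :=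
    ↑((Finset.range m).image (fun i => vec (c.getVert (2 * i)) (c.getVert (2 * i + 1))))
    with hSdef
  have hSVG : S ⊆ VG G := by
    intro x hx
    rw [hSdef, Finset.coe_image, Set.mem_image] at hx
    obtain ⟨i, hi, rfl⟩ := hx
    rw [Finset.mem_coe, Finset.mem_range] at hi
    exact ⟨_, _, hadj (2 * i) (by omega), rfl⟩
  have hSsub : S ⊆ Set.extremePoints ℝ (edgePolytope G) := hext ▸ hSVG
  have hSfin : S.Finite := (Finset.finite_toSet _)
  have hScard : S.ncard ≤ k := by
    rw [hSdef, Set.ncard_coe_finset]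
    calc _ ≤ (Finset.range m).card := Finset.card_image_le
      _ = m := Finset.card_range m
      _ ≤ k := hmk
  obtain ⟨F, hFexp, hFS⟩ := hkn S hSsub hSfin hScard
  have hmemS : ∀ i : ℕ, i < m → vec (c.getVert (2 * i)) (c.getVert (2 * i + 1)) ∈ S := by
    intro i hi
    rw [hSdef, Finset.mem_coe, Finset.mem_image]
    exact ⟨i, Finset.mem_range.mpr hi, rfl⟩
  have hs₀S : vec (c.getVert 0) (c.getVert 1) ∈ S := by
    have := hmemS 0 (by omega)
    simpa using this
  have hSF : S ⊆ F := by
    intro s hs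
    have : s ∈ F ∩ Set.extremePoints ℝ (edgePolytope G) := hFS.symm ▸ hs
    exact this.1
  have hFne : F.Nonempty := ⟨_, hSF hs₀S⟩
  obtain ⟨l, hl⟩ := hFexp hFne
  have hFP : ∀ x ∈ F, x ∈ edgePolytope G := by
    intro x hx; rw [hl] at hx; exact hx.1
  have hFmax : ∀ x ∈ F, ∀ y ∈ edgePolytope G, l y ≤ l x := by
    intro x hx; rw [hl] at hx; exact hx.2
  set c₀ : ℝ := l (vec (c.getVert 0) (c.getVert 1)) with hc₀
  have hyle : ∀ y ∈ edgePolytope G, l y ≤ c₀ :=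
    hFmax _ (hSF hs₀S)
  have hSc₀ : ∀ s ∈ S, l s = c₀ := by
    intro s hs
    have h1 : l s ≤ c₀ := hyle s (by rw [edgePolytope_eq]; exact subset_convexHull ℝ _ (hSVG hs))
    have h2 : c₀ ≤ l s := hFmax s (hSF hs) _
      (by rw [edgePolytope_eq]; exact subset_convexHull ℝ _ (hSVG hs₀S))
    linarith
  -- the vertex-functional
  set g : ℕ → ℝ := fun j => l (Pi.single (c.getVert j) 1) with hg
  have hlvec : ∀ a b : ℕ, l (vec (c.getVert a) (c.getVert b)) = g a + g b := by
    intro a b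
    rw [hg]
    show l (Pi.single (c.getVert a) 1 + Pi.single (c.getVert b) 1) = _
    rw [map_add]
  have hg2m : g (2 * m) = g 0 := by
    have hgv : c.getVert (2 * m) = c.getVert 0 := by
      rw [← hm', c.getVert_length, c.getVert_zero]
    simp only [hg, hgv]
  have hsum_even : ∑ i ∈ Finset.range m, (g (2 * i) + g (2 * i + 1)) = m * c₀ := by
    have : ∀ i ∈ Finset.range m, g (2 * i) + g (2 * i + 1) = c₀ := by
      intro i hi
      rw [← hlvec]
      exact hSc₀ _ (hmemS i (Finset.mem_range.mp hi))
    rw [Finset.sum_congr rfl this, Finset.sum_const, Finset.card_range, nsmul_eq_mul]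
  have hsum_odd : ∑ i ∈ Finset.range m, (g (2 * i + 1) + g (2 * i + 2)) = m * c₀ := by
    rw [sum_pairs', ← hsum_even, sum_pairs]
    have e1 : ∑ j ∈ Finset.range (2 * m + 1), g j =
        ∑ j ∈ Finset.range (2 * m), g j + g (2 * m) := Finset.sum_range_succ _ _
    have e2 : ∑ j ∈ Finset.range (2 * m + 1), g j =
        (∑ j ∈ Finset.range (2 * m), g (j + 1)) + g 0 := Finset.sum_range_succ' _ _
    rw [e1] at e2
    rw [hg2m] at e2
    linarith
  have hodd_le : ∀ i ∈ Finset.range m, g (2 * i + 1) + g (2 * i + 2) ≤ c₀ := by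
    intro i hi
    have hi' := Finset.mem_range.mp hi
    rw [← hlvec]
    apply hyle
    rw [edgePolytope_eq]
    apply subset_convexHull
    exact ⟨_, _, hadj (2 * i + 1) (by omega), by rw [show 2*i+1+1 = 2*i+2 by ring]⟩
  have hodd_eq : ∀ i ∈ Finset.range m, g (2 * i + 1) + g (2 * i + 2) = c₀ := by
    by_contra hcon
    push_neg at hcon
    obtain ⟨i, hi, hne⟩ := hcon
    have hlt : g (2 * i + 1) + g (2 * i + 2) < c₀ := lt_of_le_of_ne (hodd_le i hi) hne
    have : ∑ i ∈ Finset.range m, (g (2 * i + 1) + g (2 * i + 2)) <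
        ∑ _i ∈ Finset.range m, c₀ := by
      apply Finset.sum_lt_sum (fun j hj => hodd_le j hj) ⟨i, hi, hlt⟩
    rw [hsum_odd, Finset.sum_const, Finset.card_range, nsmul_eq_mul] at this
    linarith
  -- the first odd edge is in F ∩ ext = S
  have hoddS : vec (c.getVert 1) (c.getVert 2) ∈ S := by
    have h1 : l (vec (c.getVert 1) (c.getVert 2)) = c₀ := by
      have := hodd_eq 0 (Finset.mem_range.mpr (by omega))
      simpa [hlvec] using this
    have hP : vec (c.getVert 1) (c.getVert 2) ∈ edgePolytope G := by
      rw [edgePolytope_eq]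
      apply subset_convexHull
      exact ⟨_, _, hadj 1 (by omega), rfl⟩
    have hF : vec (c.getVert 1) (c.getVert 2) ∈ F := by
      rw [hl]
      refine ⟨hP, ?_⟩
      intro y hy
      rw [h1]
      exact hyle y hy
    have hextm : vec (c.getVert 1) (c.getVert 2) ∈ Set.extremePoints ℝ (edgePolytope G) := by
      rw [hext]
      exact ⟨_, _, hadj 1 (by omega), rfl⟩
    exact hFS ▸ Set.mem_inter hF hextm
  -- derive the contradiction
  rw [hSdef, Finset.mem_coe, Finset.mem_image] at hoddS
  obtain ⟨i, hi, heq⟩ := hoddS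
  rw [Finset.mem_range] at hi
  have hadj12 : G.Adj (c.getVert 1) (c.getVert 2) := by simpa using hadj 1 (by omega)
  have hadj01 : G.Adj (c.getVert 0) (c.getVert 1) := by simpa using hadj 0 (by omega)
  rcases vec_inj hadj12.ne (hadj (2 * i) (by omega)).ne heq with ⟨h1, h2⟩ | ⟨h1, h2⟩
  · rcases Nat.eq_zero_or_pos i with rfl | hipos
    · have h1' : c.getVert 0 = c.getVert 1 := by simpa using h1
      exact hadj01.ne h1'
    · have : 2 * i = 1 :=
        cycle_getVert_inj hc (by omega) (by omega) (by omega) (by omega) h1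
      omega
  · have hi0 : 2 * i + 1 = 1 :=
      cycle_getVert_inj hc (by omega) (by omega) (by omega) (by omega) h2
    have hieq : i = 0 := by omega
    subst hieq
    have h02 : c.getVert 0 = c.getVert 2 := by simpa using h1
    have h2m : c.getVert 2 = c.getVert (2 * m) := by
      rw [← h02, c.getVert_zero, ← hm', c.getVert_length]
    have : 2 = 2 * m :=
      cycle_getVert_inj hc (by omega) (by omega) (by omega) (by omega) h2m
    omega

end EPAux

theorem kNeighborly_iff_bipartite {n k : ℕ} (hk : 2 ≤ k) (G : SimpleGraph (Fin n))
    (hbip : G.Colorable 2)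
    (hiso : ∀ v : Fin n, ∃ w : Fin n, G.Adj v w)
    (hE : k ≤ G.edgeSet.ncard) :
    KNeighborly (edgePolytope G) k ↔
      ¬ ∃ (v : Fin n) (c : G.Walk v v), c.IsCycle ∧ Even c.length ∧ c.length ≤ 2 * k := by
  constructor
  · rintro hkn ⟨v, c, hc, hev, hlen⟩
    exact EPAux.dir2 hk hkn hc hev hlen
  · intro hnc
    exact EPAux.dir1 hbip hnc
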